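/- Let (G, F) be a Gaussian sheaf with orthogonal restriction maps over a connected graph where transport is path-independent (the transport map P^γ_{v→u} depends only on the endpoints v, u, not on the path γ). Then the space of global sections H⁰(G, F) is in bijection with the space G(ℝ^d) ≅ ℝ^d × S₊^d of Gaussian distributions on ℝ^d; concretely, for any fixed vertex k the evaluation map ν ↦ ν_k is a bijection from the global sections to ℝ^d × S₊^d. -/
import Mathlib


open Matrix

variable {V E : Type*} {d : ℕ}

/-- One transport step across an edge `e` from `w` to `u` (recorded as `(e, w, u)`):
`(μ,Σ) ↦ (F_{u◁e}ᵀ F_{w◁e} μ, F_{u◁e}ᵀ F_{w◁e} Σ F_{w◁e}ᵀ F_{u◁e})`. -/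
def transportStep (F : E → V → Matrix (Fin d) (Fin d) ℝ) (s : E × V × V)
    (p : (Fin d → ℝ) × Matrix (Fin d) (Fin d) ℝ) :
    (Fin d → ℝ) × Matrix (Fin d) (Fin d) ℝ :=
  ((((F s.1 s.2.2)ᵀ * F s.1 s.2.1)).mulVec p.1,
    ((F s.1 s.2.2)ᵀ * F s.1 s.2.1) * p.2 * ((F s.1 s.2.2)ᵀ * F s.1 s.2.1)ᵀ)

/-- Transport along a path, composing the edge transport maps. -/
def transport (F : E → V → Matrix (Fin d) (Fin d) ℝ) (γ : List (E × V × V))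
    (p : (Fin d → ℝ) × Matrix (Fin d) (Fin d) ℝ) :
    (Fin d → ℝ) × Matrix (Fin d) (Fin d) ℝ :=
  γ.foldl (fun q s => transportStep F s q) p

/-- `IsWalk a b v γ u`: the list of steps `γ` is a walk from `v` to `u` in the
graph with edge-endpoint maps `a`, `b`. -/
def IsWalk (a b : E → V) : V → List (E × V × V) → V → Prop
  | v, [], u => v = u
  | v, s :: rest, u =>
      s.2.1 = v ∧ ((a s.1 = s.2.1 ∧ b s.1 = s.2.2) ∨ (a s.1 = s.2.2 ∧ b s.1 = s.2.1)) ∧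
        IsWalk a b s.2.2 rest u


lemma conj_cancel (F A : Matrix (Fin d) (Fin d) ℝ) (h : Fᵀ * F = 1) :
    Fᵀ * (F * A * Fᵀ) * F = A := by
  calc Fᵀ * (F * A * Fᵀ) * F = (Fᵀ * F) * A * (Fᵀ * F) := by
        simp only [Matrix.mul_assoc]
    _ = A := by rw [h]; simp

lemma conj_cancel' (F A : Matrix (Fin d) (Fin d) ℝ) (h : F * Fᵀ = 1) :
    F * (Fᵀ * A * F) * Fᵀ = A := by
  calc F * (Fᵀ * A * F) * Fᵀ = (F * Fᵀ) * A * (F * Fᵀ) := by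
        simp only [Matrix.mul_assoc]
    _ = A := by rw [h]; simp

lemma step_sec (F : E → V → Matrix (Fin d) (Fin d) ℝ) (e : E) (w u : V)
    (horth : ∀ e v, (F e v)ᵀ * F e v = 1)
    (μw μu : Fin d → ℝ) (Sw Su : Matrix (Fin d) (Fin d) ℝ)
    (hm : (F e w).mulVec μw = (F e u).mulVec μu)
    (hc : F e w * Sw * (F e w)ᵀ = F e u * Su * (F e u)ᵀ) :
    transportStep F (e, w, u) (μw, Sw) = (μu, Su) := by
  unfold transportStep
  dsimp only
  refine Prod.ext ?_ ?_
  · rw [← Matrix.mulVec_mulVec, hm, Matrix.mulVec_mulVec, horth, Matrix.one_mulVec]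
  · rw [Matrix.transpose_mul, Matrix.transpose_transpose]
    calc (F e u)ᵀ * F e w * Sw * ((F e w)ᵀ * F e u)
        = (F e u)ᵀ * (F e w * Sw * (F e w)ᵀ) * F e u := by simp only [Matrix.mul_assoc]
      _ = Su := by rw [hc, conj_cancel _ _ (horth e u)]

lemma isWalk_append (a b : E → V) {v u x : V} {γ₁ γ₂ : List (E × V × V)}
    (h1 : IsWalk a b v γ₁ u) (h2 : IsWalk a b u γ₂ x) :
    IsWalk a b v (γ₁ ++ γ₂) x := by
  induction γ₁ generalizing v with
  | nil => cases h1; simpa using h2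
  | cons s rest ih =>
      obtain ⟨hv, hor, hrest⟩ := h1
      exact ⟨hv, hor, ih hrest⟩

lemma transport_psd (F : E → V → Matrix (Fin d) (Fin d) ℝ)
    (γ : List (E × V × V)) (p : (Fin d → ℝ) × Matrix (Fin d) (Fin d) ℝ)
    (hp : p.2.PosSemidef) : (transport F γ p).2.PosSemidef := by
  induction γ generalizing p with
  | nil => exact hp
  | cons s rest ih =>
      apply ih
      have := hp.mul_mul_conjTranspose_same ((F s.1 s.2.2)ᵀ * F s.1 s.2.1)
      simpa [transportStep] using this

lemma sec_transport (a b : E → V) (F : E → V → Matrix (Fin d) (Fin d) ℝ)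
    (horth : ∀ e v, (F e v)ᵀ * F e v = 1)
    (s : V → (Fin d → ℝ) × Matrix (Fin d) (Fin d) ℝ)
    (hm : ∀ e, (F e (a e)).mulVec ((s (a e)).1) = (F e (b e)).mulVec ((s (b e)).1))
    (hc : ∀ e, F e (a e) * (s (a e)).2 * (F e (a e))ᵀ
        = F e (b e) * (s (b e)).2 * (F e (b e))ᵀ)
    {v u : V} {γ : List (E × V × V)} (hγ : IsWalk a b v γ u) :
    transport F γ (s v) = s u := by
  induction γ generalizing v with
  | nil => cases hγ; rfl
  | cons st rest ih =>
      obtain ⟨hv, hor, hrest⟩ := hγ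
      obtain ⟨e, w, u'⟩ := st
      dsimp only at hv hor hrest
      subst hv
      have hstep : transportStep F (e, w, u') (s w) = s u' := by
        rcases hor with ⟨h1, h2⟩ | ⟨h1, h2⟩
        · have hm' := hm e; have hc' := hc e
          rw [h1, h2] at hm' hc'
          have := step_sec F e w u' horth (s w).1 (s u').1 (s w).2 (s u').2 hm' hc'
          simpa using this
        · have hm' := hm e; have hc' := hc e
          rw [h1, h2] at hm' hc'
          have := step_sec F e w u' horth (s w).1 (s u').1 (s w).2 (s u').2 hm'.symm hc'.symm
          simpa using this
      show transport F rest (transportStep F (e, w, u') (s w)) = s u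
      rw [hstep]
      exact ih hrest
/-- For a Gaussian sheaf with orthogonal restriction maps over a connected graph
with path-independent transport, evaluation at any fixed vertex `k` is a
bijection between the space of global sections `H⁰(G,F)` and the space
`ℝ^d × S₊^d` of Gaussian distributions on `ℝ^d`. -/
theorem sections_biject_gaussians (a b : E → V)
    (F : E → V → Matrix (Fin d) (Fin d) ℝ)
    (horth : ∀ e v, (F e v)ᵀ * F e v = 1)
    (hconn : ∀ v u : V, ∃ γ : List (E × V × V), IsWalk a b v γ u)
    (hpathindep : ∀ (v u : V) (γ₁ γ₂ : List (E × V × V)),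
      IsWalk a b v γ₁ u → IsWalk a b v γ₂ u →
      ∀ p : (Fin d → ℝ) × Matrix (Fin d) (Fin d) ℝ,
        transport F γ₁ p = transport F γ₂ p)
    (k : V) :
    Function.Bijective
      (fun s : {s : V → (Fin d → ℝ) × Matrix (Fin d) (Fin d) ℝ //
          (∀ w, (s w).2.PosSemidef) ∧
          (∀ e, (F e (a e)).mulVec ((s (a e)).1) = (F e (b e)).mulVec ((s (b e)).1)) ∧
          (∀ e, F e (a e) * (s (a e)).2 * (F e (a e))ᵀ
              = F e (b e) * (s (b e)).2 * (F e (b e))ᵀ)} =>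
        (⟨((s.1 k).1, (s.1 k).2), s.2.1 k⟩ :
          {p : (Fin d → ℝ) × Matrix (Fin d) (Fin d) ℝ // p.2.PosSemidef})) := by

  constructor
  · rintro ⟨s1, hps1, hm1, hc1⟩ ⟨s2, hps2, hm2, hc2⟩ h
    simp only [Subtype.mk.injEq, Prod.mk.injEq] at h
    have hk : s1 k = s2 k := Prod.ext h.1 h.2
    refine Subtype.ext (funext fun w => ?_)
    obtain ⟨γ, hγ⟩ := hconn k w
    show s1 w = s2 w
    rw [← sec_transport a b F horth s1 hm1 hc1 hγ,
        ← sec_transport a b F horth s2 hm2 hc2 hγ, hk]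
  · rintro ⟨p, hp⟩
    set g : V → (Fin d → ℝ) × Matrix (Fin d) (Fin d) ℝ :=
      fun w => transport F (hconn k w).choose p with hg
    have hkey : ∀ (w : V) (γ : List (E × V × V)), IsWalk a b k γ w →
        g w = transport F γ p := fun w γ h =>
      hpathindep k w (hconn k w).choose γ (hconn k w).choose_spec h p
    have hFFt : ∀ e v, F e v * (F e v)ᵀ = 1 :=
      fun e v => mul_eq_one_comm.mp (horth e v)
    have hgk : g k = p := hkey k [] rfl
    have hedge : ∀ e : E, g (b e) = transportStep F (e, a e, b e) (g (a e)) := by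
      intro e
      have hw1 : IsWalk a b k ((hconn k (a e)).choose ++ [(e, a e, b e)]) (b e) :=
        isWalk_append a b (hconn k (a e)).choose_spec ⟨rfl, Or.inl ⟨rfl, rfl⟩, rfl⟩
      rw [hkey (b e) _ hw1]
      show transport F _ p = _
      rw [transport, List.foldl_append]
      rfl
    refine ⟨⟨g, fun w => transport_psd F _ p hp, ?_, ?_⟩, ?_⟩
    · intro e
      rw [hedge e]
      show _ = (F e (b e)).mulVec (((F e (b e))ᵀ * F e (a e)).mulVec (g (a e)).1)
      rw [Matrix.mulVec_mulVec, ← Matrix.mul_assoc, hFFt, Matrix.one_mul]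
    · intro e
      rw [hedge e]
      show _ = F e (b e) * (((F e (b e))ᵀ * F e (a e)) * (g (a e)).2
          * ((F e (b e))ᵀ * F e (a e))ᵀ) * (F e (b e))ᵀ
      rw [Matrix.transpose_mul, Matrix.transpose_transpose]
      calc F e (a e) * (g (a e)).2 * (F e (a e))ᵀ
          = F e (b e) * ((F e (b e))ᵀ * (F e (a e) * (g (a e)).2 * (F e (a e))ᵀ)
              * F e (b e)) * (F e (b e))ᵀ := by
            rw [conj_cancel' _ _ (hFFt e (b e))]
        _ = _ := by simp only [Matrix.mul_assoc]
    · exact Subtype.ext (by simp [hgk])
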